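/- Let H be a 3-uniform hypergraph with no avoidable configuration (no connected subhypergraph with nullity ≥ 2 and at most 6 hyperedges), and let G be the graph obtained by replacing each hyperedge of H by a triangle. If G contains a triangle on a vertex set h which is not a hyperedge of H, then H contains a 'clean 3-cycle': three hyperedges h₁, h₂, h₃ such that each pair meets in exactly one vertex, these three intersection vertices are distinct and form the triangle h, and each hyperedge has one additional vertex, all distinct. -/

import Mathlib

/-- A (finite) hypergraph: a finite vertex set together with a finite set of hyperedges,
each a subset of the vertex set. -/
structure FinHypergraph (V : Type*) where
  verts : Finset V
  edges : Finset (Finset V)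
  subset_verts : ∀ e ∈ edges, e ⊆ verts

namespace FinHypergraph

variable {V : Type*}

/-- `H` is `r`-uniform: every hyperedge has exactly `r` vertices. -/
def Uniform (r : ℕ) (H : FinHypergraph V) : Prop := ∀ e ∈ H.edges, e.card = r

/-- The graph on the vertices in which two distinct vertices are adjacent iff they lie in a
common hyperedge. -/
def assoc (H : FinHypergraph V) : SimpleGraph V where
  Adj u v := u ≠ v ∧ ∃ e ∈ H.edges, u ∈ e ∧ v ∈ e
  symm := ⟨by
    rintro u v ⟨h1, e, he, hu, hv⟩
    exact ⟨h1.symm, e, he, hv, hu⟩⟩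
  loopless := ⟨by rintro u ⟨h1, -⟩; exact h1 rfl⟩

/-- The number of connected components of `H` (isolated vertices of `verts` count). -/
noncomputable def componentCount (H : FinHypergraph V) : ℕ :=
  Set.ncard ((fun v => H.assoc.connectedComponentMk v) '' ↑H.verts)

/-- The nullity `n(H) = (r-1)e(H) + c(H) - |H|` of an `r`-uniform hypergraph. -/
noncomputable def nullity (r : ℕ) (H : FinHypergraph V) : ℤ :=
  ((r : ℤ) - 1) * H.edges.card + H.componentCount - H.verts.card

/-- `H` is connected: nonempty, and any two vertices are joined by a path of hyperedges. -/
def Connected (H : FinHypergraph V) : Prop :=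
  H.verts.Nonempty ∧ ∀ u ∈ H.verts, ∀ v ∈ H.verts, H.assoc.Reachable u v

/-- The nullity `n(H) = (r-1)e(H) + 1 - |H|` of a connected `r`-uniform hypergraph. -/
def nullity1 (r : ℕ) (H : FinHypergraph V) : ℤ :=
  ((r : ℤ) - 1) * H.edges.card + 1 - H.verts.card

end FinHypergraph

section Aux
variable {V : Type*} [DecidableEq V]

private lemma card5_le (p q r s t : V) : ({p,q,r,s,t} : Finset V).card ≤ 5 := by
  have h : ({p,q,r,s,t} : Finset V) = [p,q,r,s,t].toFinset := by simp
  rw [h]; exact List.toFinset_card_le _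

private lemma third_elem {e : Finset V} (he : e.card = 3) {x y : V} (hx : x ∈ e) (hy : y ∈ e)
    (hxy : x ≠ y) : ∃ a, a ≠ x ∧ a ≠ y ∧ e = {x, y, a} := by
  have hsub : ({x, y} : Finset V) ⊆ e := by
    intro u hu; simp at hu; rcases hu with rfl | rfl <;> assumption
  have hc : (e \ {x, y}).card = 1 := by
    rw [Finset.card_sdiff_of_subset hsub, he, Finset.card_insert_of_notMem (by simp [hxy]),
      Finset.card_singleton]
  obtain ⟨a, ha⟩ := Finset.card_eq_one.mp hc
  have hamem : a ∈ e \ ({x, y} : Finset V) := ha ▸ Finset.mem_singleton_self a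
  simp only [Finset.mem_sdiff, Finset.mem_insert, Finset.mem_singleton, not_or] at hamem
  refine ⟨a, hamem.2.1, hamem.2.2, ?_⟩
  have h2 := Finset.union_sdiff_of_subset hsub
  rw [ha] at h2
  rw [← h2]; ext u; simp

end Aux

set_option maxHeartbeats 2000000 in
/-- let `H` be a 3-uniform hypergraph with no avoidable configuration (no
connected subhypergraph with nullity `≥ 2` and at most `6` hyperedges), and let `G` be the
graph obtained by replacing each hyperedge by a triangle.  If `G` contains a triangle on a
vertex set `h` which is not a hyperedge of `H`, then `H` contains a clean 3-cycle sitting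
on `h`: hyperedges `{x,y,a}, {y,z,b}, {z,x,c}` with `h = {x,y,z}` and `x,y,z,a,b,c` all
distinct. -/
theorem stmt_9 {V : Type*} [DecidableEq V] (H : FinHypergraph V) (hu : H.Uniform 3)
    (hav : ¬ ∃ C : FinHypergraph V, C.edges ⊆ H.edges ∧ C.verts = C.edges.sup id ∧
      C.Connected ∧ C.edges.card ≤ 6 ∧ 2 ≤ C.nullity1 3)
    (h : Finset V) (hcard : h.card = 3) (hnot : h ∉ H.edges)
    (htriangle : ∀ u ∈ h, ∀ v ∈ h, u ≠ v → ∃ e ∈ H.edges, u ∈ e ∧ v ∈ e) :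
    ∃ x y z a b c : V, h = {x, y, z} ∧ [x, y, z, a, b, c].Pairwise (· ≠ ·) ∧
      ({x, y, a} : Finset V) ∈ H.edges ∧ ({y, z, b} : Finset V) ∈ H.edges ∧
      ({z, x, c} : Finset V) ∈ H.edges := by
  obtain ⟨x, y, z, hxy, hxz, hyz, hh⟩ := Finset.card_eq_three.mp hcard
  subst hh
  have hxh : x ∈ ({x, y, z} : Finset V) := by simp
  have hyh : y ∈ ({x, y, z} : Finset V) := by simp
  have hzh : z ∈ ({x, y, z} : Finset V) := by simp
  obtain ⟨e₁, he₁, hxe₁, hye₁⟩ := htriangle x hxh y hyh hxy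
  obtain ⟨e₂, he₂, hye₂, hze₂⟩ := htriangle y hyh z hzh hyz
  obtain ⟨e₃, he₃, hze₃, hxe₃⟩ := htriangle z hzh x hxh (Ne.symm hxz)
  obtain ⟨a, hax, hay, he₁eq⟩ := third_elem (hu e₁ he₁) hxe₁ hye₁ hxy
  obtain ⟨b, hby, hbz, he₂eq⟩ := third_elem (hu e₂ he₂) hye₂ hze₂ hyz
  obtain ⟨c, hcz, hcx, he₃eq⟩ := third_elem (hu e₃ he₃) hze₃ hxe₃ (Ne.symm hxz)
  have haz : a ≠ z := by rintro rfl; exact hnot (he₁eq ▸ he₁)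
  have hbx : b ≠ x := by
    intro hbx'
    have : e₂ = {x, y, z} := by rw [he₂eq, hbx']; ext u; simp; tauto
    exact hnot (this ▸ he₂)
  have hcy : c ≠ y := by
    intro hcy'
    have : e₃ = {x, y, z} := by rw [he₃eq, hcy']; ext u; simp; tauto
    exact hnot (this ▸ he₃)
  have hxe₂ : x ∉ e₂ := by
    rw [he₂eq]; simp only [Finset.mem_insert, Finset.mem_singleton, not_or]
    exact ⟨hxy, hxz, fun h => hbx h.symm⟩
  have hze₁ : z ∉ e₁ := by
    rw [he₁eq]; simp only [Finset.mem_insert, Finset.mem_singleton, not_or]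
    exact ⟨Ne.symm hxz, Ne.symm hyz, fun h => haz h.symm⟩
  have he12 : e₁ ≠ e₂ := fun h => hxe₂ (h ▸ hxe₁)
  have he13 : e₁ ≠ e₃ := fun h => hze₁ (h ▸ hze₃)
  have he23 : e₂ ≠ e₃ := fun h => hxe₂ (h ▸ hxe₃)
  have key : ∀ S : Finset V, e₁ ⊆ S → e₂ ⊆ S → e₃ ⊆ S → S.card ≤ 5 → False := by
    intro S hS1 hS2 hS3 hS5
    apply hav
    set C : FinHypergraph V :=
      ⟨({e₁, e₂, e₃} : Finset (Finset V)).sup id, {e₁, e₂, e₃},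
        fun e he => Finset.le_sup (f := id) he⟩ with hC
    have hCe : C.edges = {e₁, e₂, e₃} := rfl
    have hCv : C.verts = ({e₁, e₂, e₃} : Finset (Finset V)).sup id := rfl
    have me₁ : e₁ ∈ C.edges := by rw [hCe]; simp
    have me₂ : e₂ ∈ C.edges := by rw [hCe]; simp
    have me₃ : e₃ ∈ C.edges := by rw [hCe]; simp
    have hc3 : C.edges.card = 3 := by
      rw [hCe]; exact Finset.card_eq_three.mpr ⟨e₁, e₂, e₃, he12, he13, he23, rfl⟩
    have hvmem : ∀ u : V, u ∈ C.verts ↔ u ∈ e₁ ∨ u ∈ e₂ ∨ u ∈ e₃ := by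
      intro u
      rw [hCv, Finset.mem_sup]
      constructor
      · rintro ⟨v, hv, hu⟩
        simp only [Finset.mem_insert, Finset.mem_singleton] at hv
        rcases hv with rfl | rfl | rfl
        exacts [Or.inl hu, Or.inr (Or.inl hu), Or.inr (Or.inr hu)]
      · rintro (h | h | h)
        exacts [⟨e₁, by simp, h⟩, ⟨e₂, by simp, h⟩, ⟨e₃, by simp, h⟩]
    have hreach : ∀ e ∈ C.edges, ∀ w₁ ∈ e, ∀ w₂ ∈ e, C.assoc.Reachable w₁ w₂ := by
      intro e he w₁ h1 w₂ h2
      rcases eq_or_ne w₁ w₂ with rfl | hne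
      · exact SimpleGraph.Reachable.refl _
      · exact SimpleGraph.Adj.reachable ⟨hne, e, he, h1, h2⟩
    have hy' : ∀ u ∈ C.verts, C.assoc.Reachable u y := by
      intro u hu
      rcases (hvmem u).mp hu with h1 | h2 | h3
      · exact hreach e₁ me₁ u h1 y hye₁
      · exact hreach e₂ me₂ u h2 y hye₂
      · exact (hreach e₃ me₃ u h3 x hxe₃).trans (hreach e₁ me₁ x hxe₁ y hye₁)
    have hsub : C.verts ⊆ S := by
      intro u hu
      rcases (hvmem u).mp hu with h1 | h2 | h3
      exacts [hS1 h1, hS2 h2, hS3 h3]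
    refine ⟨C, ?_, rfl, ⟨⟨x, (hvmem x).mpr (Or.inl hxe₁)⟩,
      fun u hu v hv => (hy' u hu).trans (hy' v hv).symm⟩, by rw [hc3]; norm_num, ?_⟩
    · rw [hCe]
      intro e he
      simp only [Finset.mem_insert, Finset.mem_singleton] at he
      rcases he with rfl | rfl | rfl
      exacts [he₁, he₂, he₃]
    · have hcv : C.verts.card ≤ 5 := le_trans (Finset.card_le_card hsub) hS5
      have hcv2 : (({e₁, e₂, e₃} : Finset (Finset V)).sup id).card ≤ 5 := hcv
      simp only [FinHypergraph.nullity1, hc3]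
      push_cast
      omega
  have hab : a ≠ b := by
    rintro rfl
    exact key {x, y, z, a, c} (by rw [he₁eq]; intro u hu; simp at hu ⊢; tauto)
      (by rw [he₂eq]; intro u hu; simp at hu ⊢; tauto)
      (by rw [he₃eq]; intro u hu; simp at hu ⊢; tauto) (card5_le _ _ _ _ _)
  have hac : a ≠ c := by
    rintro rfl
    exact key {x, y, z, a, b} (by rw [he₁eq]; intro u hu; simp at hu ⊢; tauto)
      (by rw [he₂eq]; intro u hu; simp at hu ⊢; tauto)
      (by rw [he₃eq]; intro u hu; simp at hu ⊢; tauto) (card5_le _ _ _ _ _)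
  have hbc : b ≠ c := by
    rintro rfl
    exact key {x, y, z, a, b} (by rw [he₁eq]; intro u hu; simp at hu ⊢; tauto)
      (by rw [he₂eq]; intro u hu; simp at hu ⊢; tauto)
      (by rw [he₃eq]; intro u hu; simp at hu ⊢; tauto) (card5_le _ _ _ _ _)
  refine ⟨x, y, z, a, b, c, rfl, ?_, he₁eq ▸ he₁, he₂eq ▸ he₂, he₃eq ▸ he₃⟩
  have h1 := hax.symm; have h2 := hay.symm; have h3 := haz.symm
  have h4 := hbx.symm; have h5 := hby.symm; have h6 := hbz.symm
  have h7 := hcx.symm; have h8 := hcy.symm; have h9 := hcz.symm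
  simp [List.pairwise_cons, hxy, hxz, hyz, h1, h2, h3, h4, h5, h6, h7, h8, h9, hab, hac, hbc]
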